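/- Let g be a complex semisimple Z/m-graded Lie algebra with homogeneous Cartan subalgebra h satisfying h₀ = h ∩ g₀ = 0. Then no proper parabolic subalgebra p of g containing h with g_α ⊆ p for all α with α(Z) ≥ 0 (where Z is the grading element of the associated ℤ-grading of g with p = g(≥0)) is θ-stable. -/

import Mathlib

open Module LieAlgebra LieModule Finset

namespace NoThetaAux

variable {L : Type*} [LieRing L] [LieAlgebra ℂ L]

lemma conj_pow_apply (e : L ≃ₗ[ℂ] L) (he : ∀ x y : L, ⁅e x, e y⁆ = e ⁅x, y⁆)
    (Z : L) (c : ℂ) (N : ℕ) (u : L) :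
    ((ad ℂ L (e Z) - c • 1) ^ N) (e u) = e (((ad ℂ L Z - c • 1) ^ N) u) := by
  induction N with
  | zero => simp
  | succ N ih =>
      rw [pow_succ', pow_succ']
      simp only [Module.End.mul_apply, ih]
      set v := ((ad ℂ L Z - c • (1 : Module.End ℂ L)) ^ N) u with hv
      simp only [LinearMap.sub_apply, LinearMap.smul_apply, Module.End.one_apply, ad_apply]
      rw [he Z v, ← map_smul, ← map_sub]

lemma mem_maxGen_conj (e : L ≃ₗ[ℂ] L) (he : ∀ x y : L, ⁅e x, e y⁆ = e ⁅x, y⁆)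
    (Z : L) (c : ℂ) (u : L) :
    e u ∈ (ad ℂ L (e Z)).maxGenEigenspace c ↔ u ∈ (ad ℂ L Z).maxGenEigenspace c := by
  rw [Module.End.mem_maxGenEigenspace, Module.End.mem_maxGenEigenspace]
  constructor
  · rintro ⟨k, hk⟩
    refine ⟨k, ?_⟩
    rw [conj_pow_apply e he Z c k u] at hk
    simpa using e.injective (by simpa using hk)
  · rintro ⟨k, hk⟩
    exact ⟨k, by rw [conj_pow_apply e he Z c k u, hk, map_zero]⟩

lemma mem_eigen_conj (e : L ≃ₗ[ℂ] L) (he : ∀ x y : L, ⁅e x, e y⁆ = e ⁅x, y⁆)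
    (Z : L) (c : ℂ) (u : L) :
    e u ∈ (ad ℂ L (e Z)).eigenspace c ↔ u ∈ (ad ℂ L Z).eigenspace c := by
  rw [Module.End.mem_eigenspace_iff, Module.End.mem_eigenspace_iff, ad_apply, ad_apply,
    he Z u, ← map_smul]
  exact ⟨fun h => e.injective h, fun h => by rw [h]⟩

variable {M : Type*} [AddCommGroup M] [Module ℂ M]

lemma maxGen_eq_eigen (f : Module.End ℂ M)
    (hf : ⨆ j : ℤ, f.eigenspace (j : ℂ) = ⊤) (c : ℂ) :
    f.maxGenEigenspace c = f.eigenspace c := by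
  have hle : f.eigenspace c ≤ f.maxGenEigenspace c := (f.genEigenspace c).monotone le_top
  refine le_antisymm ?_ hle
  set S := ⨆ (μ : ℂ) (_ : μ ≠ c), f.maxGenEigenspace μ with hS
  have hdis : Disjoint (f.maxGenEigenspace c) S := f.independent_maxGenEigenspace c
  have htop : f.eigenspace c ⊔ S = ⊤ := by
    rw [eq_top_iff, ← hf]
    refine iSup_le fun j => ?_
    by_cases hj : ((j : ℂ)) = c
    · rw [hj]
      exact le_sup_of_le_left le_rfl
    · refine le_sup_of_le_right <|
        le_trans ((f.genEigenspace ((j : ℂ))).monotone le_top) ?_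
      exact le_iSup₂ (f := fun (μ : ℂ) (_ : μ ≠ c) => f.maxGenEigenspace μ) ((j : ℂ)) hj
  have h1 : f.maxGenEigenspace c = (f.eigenspace c ⊔ S) ⊓ f.maxGenEigenspace c := by
    rw [htop, top_inf_eq]
  have h2 : (f.eigenspace c ⊔ S) ⊓ f.maxGenEigenspace c
      = f.eigenspace c ⊔ S ⊓ f.maxGenEigenspace c := sup_inf_assoc_of_le S hle
  have h3 : S ⊓ f.maxGenEigenspace c = ⊥ := hdis.symm.eq_bot
  rw [h1, h2, h3, sup_bot_eq]

lemma eigen_int (f : Module.End ℂ M)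
    (hf : ⨆ j : ℤ, f.eigenspace (j : ℂ) = ⊤) (c : ℂ) (hc : f.eigenspace c ≠ ⊥) :
    ∃ n : ℤ, c = (n : ℂ) := by
  by_contra hcon
  push_neg at hcon
  refine hc ?_
  have hdis : Disjoint (f.eigenspace c) (⨆ (μ : ℂ) (_ : μ ≠ c), f.eigenspace μ) :=
    f.eigenspaces_iSupIndep c
  refine hdis.eq_bot_of_le ?_
  refine le_trans le_top ?_
  rw [← hf]
  exact iSup_le fun j =>
    le_iSup₂ (f := fun (μ : ℂ) (_ : μ ≠ c) => f.eigenspace μ) ((j : ℂ)) (fun h => hcon j h.symm)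

end NoThetaAux
open NoThetaAux in
/-- in a complex semisimple `ℤ/m`-graded Lie algebra with homogeneous
(θ-stable) Cartan subalgebra `H` satisfying `h₀ = H ∩ g₀ = 0`, no proper parabolic
subalgebra `p = g(≥0)` associated to a grading element `Z ∈ H` is `θ`-stable. -/
theorem no_theta_stable_parabolic
    {L : Type*} [LieRing L] [LieAlgebra ℂ L] [Module.Finite ℂ L]
    [LieAlgebra.IsSemisimple ℂ L]
    (m : ℕ) [NeZero m]
    (G : ZMod m → Submodule ℂ L)
    (hint : DirectSum.IsInternal G)
    (hbr : ∀ i j : ZMod m, ∀ x ∈ G i, ∀ y ∈ G j, ⁅x, y⁆ ∈ G (i + j))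
    (θ : L ≃ₗ⁅ℂ⁆ L)
    (hθ : ∀ l : ZMod m, ∀ x ∈ G l,
      θ x = Complex.exp (2 * Real.pi * Complex.I / m) ^ (l.val) • x)
    (H : LieSubalgebra ℂ L) [H.IsCartanSubalgebra]
    (hHstable : ∀ h ∈ H, θ h ∈ H)
    (hH0 : H.toSubmodule ⊓ G 0 = ⊥)
    -- `Z` is the grading element of a `ℤ`-grading of `g`:
    (Z : L) (hZH : Z ∈ H)
    (hZint : DirectSum.IsInternal
      (fun j : ℤ => Module.End.eigenspace (LieAlgebra.ad ℂ L Z) (j : ℂ)))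
    -- `p = g(≥ 0)` is the associated parabolic subalgebra:
    (p : Submodule ℂ L)
    (hp : p = ⨆ j : ℕ, Module.End.eigenspace (LieAlgebra.ad ℂ L Z) (j : ℂ))
    (hproper : p ≠ ⊤) :
    ¬ (∀ x ∈ p, θ x ∈ p) := by
  intro hstab
  set ζ : ℂ := Complex.exp (2 * Real.pi * Complex.I / m) with hζ
  have hm0 : (m : ℂ) ≠ 0 := by exact_mod_cast (NeZero.ne m)
  -- the iterates of θ as linear equivalences
  set ek : ℕ → L ≃ₗ[ℂ] L := fun k => (θ.toLinearEquiv) ^ k with hek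
  have hek0 : ∀ x : L, ek 0 x = x := fun x => by simp [hek]
  have heksucc : ∀ (k : ℕ) (x : L), ek (k + 1) x = θ (ek k x) := by
    intro k x
    simp only [hek, LinearEquiv.pow_apply, Function.iterate_succ_apply']
    simp [LieEquiv.coe_toLinearEquiv]
  have hθsmul : ∀ (c : ℂ) (x : L), θ (c • x) = c • θ x := fun c x =>
    map_smul θ.toLinearEquiv c x
  have hlie : ∀ (k : ℕ) (x y : L), ⁅ek k x, ek k y⁆ = ek k ⁅x, y⁆ := by
    intro k
    induction k with
    | zero => intro x y; simp [hek0]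
    | succ k ih =>
        intro x y
        rw [heksucc, heksucc, heksucc, ← LieEquiv.map_lie, ih]
  have hHk : ∀ k : ℕ, ek k Z ∈ H := by
    intro k
    induction k with
    | zero => rw [hek0]; exact hZH
    | succ k ih => rw [heksucc]; exact hHstable _ ih
  have hPk : ∀ (k : ℕ) (x : L), x ∈ p → ek k x ∈ p := by
    intro k
    induction k with
    | zero => intro x hx; rw [hek0]; exact hx
    | succ k ih => intro x hx; rw [heksucc]; exact hstab _ (ih x hx)
  -- ζ and geometric sums
  have hζm : ζ ^ m = 1 := by
    rw [hζ, ← Complex.exp_nat_mul]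
    have h1 : (m : ℂ) * (2 * Real.pi * Complex.I / m) = 2 * Real.pi * Complex.I := by
      field_simp
    rw [h1, Complex.exp_two_pi_mul_I]
  have hζl : ∀ l : ZMod m, l ≠ 0 → ζ ^ (l.val) ≠ 1 := by
    intro l hl h1
    have hv0 : l.val ≠ 0 := fun h => hl ((ZMod.val_eq_zero l).mp h)
    have hvm : l.val < m := ZMod.val_lt l
    rw [hζ, ← Complex.exp_nat_mul, Complex.exp_eq_one_iff] at h1
    obtain ⟨n, hn⟩ := h1
    rw [mul_div_assoc', div_eq_iff hm0] at hn
    have h2pi : (2 * (Real.pi : ℂ) * Complex.I) ≠ 0 := by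
      simp [Real.pi_ne_zero, Complex.I_ne_zero, Complex.ofReal_ne_zero]
    have hn' : ((l.val : ℂ)) * (2 * (Real.pi : ℂ) * Complex.I)
        = ((n : ℂ) * (m : ℂ)) * (2 * (Real.pi : ℂ) * Complex.I) := by
      linear_combination hn
    have h3 : ((l.val : ℂ)) = (n : ℂ) * (m : ℂ) := mul_right_cancel₀ h2pi hn'
    have h4 : (l.val : ℤ) = n * m := by exact_mod_cast h3
    have hmz : 0 < (m : ℤ) := by exact_mod_cast Nat.pos_of_ne_zero (NeZero.ne m)
    have hlz : 0 < (l.val : ℤ) := by exact_mod_cast Nat.pos_of_ne_zero hv0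
    have hn1 : 1 ≤ n := by nlinarith
    have h5 : (m : ℤ) ≤ (l.val : ℤ) := by nlinarith
    have h6 : ((l.val : ℤ)) < (m : ℤ) := by exact_mod_cast hvm
    exact absurd h5 (not_le.mpr h6)
  -- decompose Z along the grading
  have hGtop : (⨆ l, G l) = ⊤ := hint.submodule_iSup_eq_top
  obtain ⟨f, hfmem, hfsum⟩ := (Submodule.mem_iSup_iff_exists_finsupp G Z).mp
    (hGtop ▸ Submodule.mem_top)
  have hZeq : ∑ l : ZMod m, f l = Z := by
    rw [← hfsum, Finsupp.sum]
    exact (Finset.sum_subset (Finset.subset_univ _)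
      (fun x _ hx => Finsupp.notMem_support_iff.mp hx)).symm
  -- action of iterates of θ on the components
  have hcomp : ∀ (k : ℕ) (l : ZMod m), ek k (f l) = (ζ ^ (l.val)) ^ k • f l := by
    intro k l
    induction k with
    | zero => rw [hek0, pow_zero, one_smul]
    | succ k ih =>
        rw [heksucc, ih, hθsmul, hθ l (f l) (hfmem l), pow_succ, mul_smul]
  -- the sum of the iterates of θ applied to Z vanishes
  have hsum_eq : ∑ k ∈ Finset.range m, ek k Z = (m : ℂ) • f 0 := by
    have h1 : ∀ k : ℕ, ek k Z = ∑ l : ZMod m, (ζ ^ (l.val)) ^ k • f l := by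
      intro k
      rw [← hZeq, map_sum]
      exact Finset.sum_congr rfl fun l _ => hcomp k l
    calc ∑ k ∈ Finset.range m, ek k Z
        = ∑ k ∈ Finset.range m, ∑ l : ZMod m, (ζ ^ (l.val)) ^ k • f l :=
          Finset.sum_congr rfl fun k _ => h1 k
      _ = ∑ l : ZMod m, (∑ k ∈ Finset.range m, (ζ ^ (l.val)) ^ k) • f l := by
          rw [Finset.sum_comm]
          exact Finset.sum_congr rfl fun l _ => (Finset.sum_smul).symm
      _ = (m : ℂ) • f 0 := by
          rw [Finset.sum_eq_single (0 : ZMod m)]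
          · have : (0 : ZMod m).val = 0 := ZMod.val_zero
            rw [this, pow_zero]
            simp
          · intro l _ hl
            have hz : ∑ k ∈ Finset.range m, (ζ ^ (l.val)) ^ k = 0 := by
              rw [geom_sum_eq (hζl l hl) m, ← pow_mul, mul_comm (l.val) m, pow_mul, hζm,
                one_pow, sub_self, zero_div]
            rw [hz, zero_smul]
          · intro h
            exact absurd (Finset.mem_univ (0 : ZMod m)) h
  have hS0 : ∑ k ∈ Finset.range m, ek k Z = 0 := by
    have hmem : ((m : ℂ) • f 0) ∈ H.toSubmodule ⊓ G 0 := by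
      constructor
      · rw [← hsum_eq]
        exact Submodule.sum_mem _ fun k _ => hHk k
      · exact Submodule.smul_mem _ _ (hfmem 0)
    rw [hsum_eq]
    exact (Submodule.mem_bot ℂ).mp (hH0 ▸ hmem)
  -- the ℤ-grading facts
  have hZtop : (⨆ j : ℤ, Module.End.eigenspace (LieAlgebra.ad ℂ L Z) (j : ℂ)) = ⊤ :=
    hZint.submodule_iSup_eq_top
  -- existence of a negative eigenvalue
  have hneg : ∃ j : ℤ, j < 0 ∧ Module.End.eigenspace (LieAlgebra.ad ℂ L Z) (j : ℂ) ≠ ⊥ := by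
    by_contra hno
    push_neg at hno
    apply hproper
    rw [eq_top_iff, ← hZtop]
    refine iSup_le fun j => ?_
    by_cases hj : 0 ≤ j
    · have hcast : ((j.toNat : ℕ) : ℂ) = ((j : ℂ)) := by
        exact_mod_cast Int.toNat_of_nonneg hj
      rw [hp, ← hcast]
      exact le_iSup (fun n : ℕ => Module.End.eigenspace (LieAlgebra.ad ℂ L Z) ((n : ℂ))) j.toNat
    · rw [hno j (lt_of_not_ge hj)]
      exact bot_le
  obtain ⟨j, hjneg, hjne⟩ := hneg
  -- bridge between weight spaces (w.r.t. H) and generalized eigenspaces of ad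
  have hbridge : ∀ (x : H) (χ : H → ℂ),
      (LieModule.genWeightSpace L χ : Submodule ℂ L) ≤
        (LieAlgebra.ad ℂ L (x : L)).maxGenEigenspace (χ x) := by
    intro x χ w hw
    rw [LieSubmodule.mem_toSubmodule, LieModule.mem_genWeightSpace] at hw
    obtain ⟨k, hk⟩ := hw x
    rw [Module.End.mem_maxGenEigenspace]
    refine ⟨k, ?_⟩
    have hEnd : LieModule.toEnd ℂ H L x = LieAlgebra.ad ℂ L (x : L) := by
      ext y
      rw [LieModule.toEnd_apply_apply, LieSubalgebra.coe_bracket_of_module, LieAlgebra.ad_apply]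
    rw [← hEnd]
    exact hk
  -- choose a weight χ whose value on Z is j
  have hwtop : (⨆ χ : H → ℂ, (LieModule.genWeightSpace L χ : Submodule ℂ L)) = ⊤ := by
    have h := LieModule.iSup_genWeightSpace_eq_top ℂ H L
    rw [← LieSubmodule.iSup_toSubmodule, h, LieSubmodule.top_toSubmodule]
  have hexχ : ∃ χ : H → ℂ, (LieModule.genWeightSpace L χ : Submodule ℂ L) ≠ ⊥ ∧
      χ ⟨Z, hZH⟩ = ((j : ℂ)) := by
    by_contra hc
    push_neg at hc
    refine hjne ?_
    have hdis : Disjoint (Module.End.eigenspace (LieAlgebra.ad ℂ L Z) ((j : ℂ)))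
        (⨆ (μ : ℂ) (_ : μ ≠ ((j : ℂ))), Module.End.eigenspace (LieAlgebra.ad ℂ L Z) μ) :=
      (LieAlgebra.ad ℂ L Z).eigenspaces_iSupIndep ((j : ℂ))
    refine hdis.eq_bot_of_le (le_trans le_top ?_)
    rw [← hwtop]
    refine iSup_le fun χ => ?_
    by_cases hχ : (LieModule.genWeightSpace L χ : Submodule ℂ L) = ⊥
    · rw [hχ]; exact bot_le
    · have hne := hc χ hχ
      refine le_trans (hbridge ⟨Z, hZH⟩ χ) ?_
      rw [maxGen_eq_eigen _ hZtop]
      exact le_iSup₂ (f := fun (μ : ℂ) (_ : μ ≠ ((j : ℂ))) =>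
        Module.End.eigenspace (LieAlgebra.ad ℂ L Z) μ) (χ ⟨Z, hZH⟩) hne
  obtain ⟨χ, hχne, hχZ⟩ := hexχ
  obtain ⟨w, hwmem, hwne⟩ := Submodule.exists_mem_ne_zero_of_ne_bot hχne
  -- for each k, the weight value on the k-th iterate is an integer
  have hkey : ∀ k : ℕ, ∃ n : ℤ, χ ⟨ek k Z, hHk k⟩ = ((n : ℂ)) ∧
      ⁅ek k Z, w⁆ = ((n : ℂ)) • w ∧ (0 ≤ n → w ∈ p) := by
    intro k
    set c : ℂ := χ ⟨ek k Z, hHk k⟩ with hc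
    have hw1 : w ∈ (LieAlgebra.ad ℂ L (ek k Z)).maxGenEigenspace c :=
      hbridge ⟨ek k Z, hHk k⟩ χ hwmem
    set u : L := (ek k).symm w with hu
    have heu : ek k u = w := (ek k).apply_symm_apply w
    have humax : u ∈ (LieAlgebra.ad ℂ L Z).maxGenEigenspace c := by
      rw [← mem_maxGen_conj (ek k) (hlie k) Z c u, heu]
      exact hw1
    have hueig : u ∈ (LieAlgebra.ad ℂ L Z).eigenspace c := by
      rw [← maxGen_eq_eigen _ hZtop]
      exact humax
    have hune : u ≠ 0 := fun h => hwne (by rw [← heu, h, map_zero])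
    have hcnb : (LieAlgebra.ad ℂ L Z).eigenspace c ≠ ⊥ := fun h => hune (by
      have h' := hueig
      rw [h] at h'
      simpa using h')
    obtain ⟨n, hn⟩ := eigen_int _ hZtop c hcnb
    refine ⟨n, hn, ?_, ?_⟩
    · have h' : ek k u ∈ (LieAlgebra.ad ℂ L (ek k Z)).eigenspace c :=
        (mem_eigen_conj (ek k) (hlie k) Z c u).mpr hueig
      rw [heu, Module.End.mem_eigenspace_iff, LieAlgebra.ad_apply] at h'
      rw [hn] at h'
      exact h'
    · intro hn0
      have hup : u ∈ p := by
        rw [hp]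
        have hcast : ((n.toNat : ℕ) : ℂ) = c := by
          rw [hn]
          exact_mod_cast Int.toNat_of_nonneg hn0
        refine (le_iSup (fun nn : ℕ =>
          Module.End.eigenspace (LieAlgebra.ad ℂ L Z) ((nn : ℂ))) n.toNat) ?_
        rw [hcast]
        exact hueig
      rw [← heu]
      exact hPk k u hup
  choose nn h1 h2 h3 using hkey
  -- the sum of the integers vanishes
  have hlie0 : ∑ k ∈ Finset.range m, ⁅ek k Z, w⁆ = 0 := by
    have hsb : ∀ s : Finset ℕ, ⁅∑ k ∈ s, ek k Z, w⁆ = ∑ k ∈ s, ⁅ek k Z, w⁆ := by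
      intro s
      induction s using Finset.induction_on with
      | empty => simp
      | insert _ _ hns ih => rw [Finset.sum_insert hns, Finset.sum_insert hns, add_lie, ih]
    rw [← hsb, hS0, zero_lie]
  have hsumc : ((∑ k ∈ Finset.range m, nn k : ℤ) : ℂ) • w = 0 := by
    push_cast
    rw [Finset.sum_smul]
    rw [Finset.sum_congr rfl (fun k _ => (h2 k).symm)]
    exact hlie0
  have hsum0 : ∑ k ∈ Finset.range m, nn k = 0 := by
    have h := (smul_eq_zero.mp hsumc).resolve_right hwne
    exact_mod_cast h
  have hn0j : nn 0 = j := by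
    have hsub : (⟨ek 0 Z, hHk 0⟩ : H) = ⟨Z, hZH⟩ := Subtype.ext (hek0 Z)
    have h := h1 0
    rw [hsub, hχZ] at h
    exact_mod_cast h.symm
  have hpos : ∃ k ∈ Finset.range m, 0 < nn k := by
    by_contra hcon
    push_neg at hcon
    have hlt : ∑ k ∈ Finset.range m, nn k < ∑ k ∈ Finset.range m, (0 : ℤ) :=
      Finset.sum_lt_sum (fun k hk => hcon k hk)
        ⟨0, Finset.mem_range.mpr (Nat.pos_of_ne_zero (NeZero.ne m)),
          by rw [hn0j]; exact hjneg⟩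
    rw [Finset.sum_const_zero, hsum0] at hlt
    exact lt_irrefl 0 hlt
  obtain ⟨k, hkm, hkpos⟩ := hpos
  have hwp : w ∈ p := h3 k (le_of_lt hkpos)
  have hweig : w ∈ Module.End.eigenspace (LieAlgebra.ad ℂ L Z) ((j : ℂ)) := by
    have h := h2 0
    rw [hek0, hn0j] at h
    rw [Module.End.mem_eigenspace_iff, LieAlgebra.ad_apply]
    exact h
  -- final contradiction
  have hdis := (LieAlgebra.ad ℂ L Z).eigenspaces_iSupIndep ((j : ℂ))
  have hple : p ≤ ⨆ (μ : ℂ) (_ : μ ≠ ((j : ℂ))),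
      Module.End.eigenspace (LieAlgebra.ad ℂ L Z) μ := by
    rw [hp]
    refine iSup_le fun nnat => ?_
    have hne : ((nnat : ℂ)) ≠ ((j : ℂ)) := by
      intro hh
      have : ((nnat : ℤ)) = j := by exact_mod_cast hh
      omega
    exact le_iSup₂ (f := fun (μ : ℂ) (_ : μ ≠ ((j : ℂ))) =>
      Module.End.eigenspace (LieAlgebra.ad ℂ L Z) μ) ((nnat : ℂ)) hne
  exact hwne (Submodule.disjoint_def.mp hdis w hweig (hple hwp))
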